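/- Let n ≥ 1, m ≥ 0, d ≥ 2, and let C = L_{d+1} ∘ Z_d ∘ ⋯ ∘ Z_1 ∘ L_1 be a depth-d QAC circuit on 1+n+m qubits that α-computes ⊕_n for some unit ancilla state α. Suppose that either (i) the 2×2 unitary applied to qubit 0 in the final single-qubit layer L_{d+1} is semiclassical, or (ii) no CZ gate in layer Z_d with at least two qubits contains qubit 0. Then there exists a depth-(d−1) QAC circuit on the same register that α-computes ⊕_n. -/
import Mathlib


open scoped BigOperators

/-- The state space of `N` qubits: amplitudes indexed by bit strings of length `N`. -/
abbrev QState (N : ℕ) := (Fin N → Bool) → ℂ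

/-- A unit vector (state vector): Euclidean norm 1. -/
def UnitVec {N : ℕ} (ψ : QState N) : Prop := ∑ x, ‖ψ x‖ ^ 2 = 1

/-- The C-SIGN gate on the qubits in `S`: flips the sign of the amplitude exactly
when all bits in `S` are `1`. -/
noncomputable def czGate {N : ℕ} (S : Finset (Fin N)) (ψ : QState N) : QState N :=
  fun x => if ∀ i ∈ S, x i = true then -ψ x else ψ x

/-- A layer of C-SIGN gates on pairwise disjoint sets of qubits, applied in sequence. -/
noncomputable def czLayerAct {N : ℕ} (gs : List (Finset (Fin N))) (ψ : QState N) : QState N :=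
  gs.foldr czGate ψ

/-- Interpret a `Bool` as an index into a `2 × 2` matrix. -/
def bitIdx (b : Bool) : Fin 2 := if b then 1 else 0

/-- A layer of single-qubit gates, one `2 × 2` matrix per qubit, acting on the register. -/
noncomputable def layerAct {N : ℕ} (U : Fin N → Matrix (Fin 2) (Fin 2) ℂ) (ψ : QState N) :
    QState N :=
  fun x => ∑ y : Fin N → Bool, (∏ j, U j (bitIdx (x j)) (bitIdx (y j))) * ψ y

/-- A depth-`d` QAC circuit on `N` qubits: `d + 1` single-qubit layers
`L 0, …, L d` interleaved with `d` CZ layers `Z 0, …, Z (d-1)`;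
the circuit is `L d ∘ Z (d-1) ∘ L (d-1) ∘ ⋯ ∘ Z 0 ∘ L 0`. -/
structure QAC (N d : ℕ) where
  /-- the single-qubit layers (a `2 × 2` unitary for each qubit) -/
  L : Fin (d + 1) → Fin N → Matrix (Fin 2) (Fin 2) ℂ
  hL : ∀ i j, L i j ∈ Matrix.unitaryGroup (Fin 2) ℂ
  /-- the CZ layers: each is a list of pairwise disjoint sets of qubits -/
  Z : Fin d → List (Finset (Fin N))
  hZ : ∀ i, (Z i).Pairwise (fun S T => Disjoint S T)

/-- The action of a QAC circuit on a state. -/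
noncomputable def QAC.act {N d : ℕ} (C : QAC N d) (ψ : QState N) : QState N :=
  layerAct (C.L (Fin.last d))
    ((List.finRange d).foldl
      (fun φ i => czLayerAct (C.Z i) (layerAct (C.L i.castSucc) φ)) ψ)

/-- The target qubit (qubit `0`) in a register of `1 + n + m` qubits. -/
def tgt (n m : ℕ) : Fin (1 + n + m) := ⟨0, by omega⟩

/-- The `i`-th input qubit (qubit `1 + i`). -/
def inp (n m : ℕ) (i : Fin n) : Fin (1 + n + m) := ⟨1 + i.1, by have := i.2; omega⟩

/-- The `j`-th ancilla qubit (qubit `1 + n + j`). -/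
def anc (n m : ℕ) (j : Fin m) : Fin (1 + n + m) := ⟨1 + n + j.1, by have := j.2; omega⟩

/-- The `j`-th non-target qubit (qubit `1 + j`). -/
def nontgt (n m : ℕ) (j : Fin (n + m)) : Fin (1 + n + m) := ⟨1 + j.1, by have := j.2; omega⟩

/-- The set of input qubits. -/
def inputs (n m : ℕ) : Finset (Fin (1 + n + m)) := Finset.univ.image (inp n m)

/-- The parity (mod-2 bit-sum) of a bit string, as a `Bool`. -/
def parityB {n : ℕ} (x : Fin n → Bool) : Bool :=
  decide ((∑ i, if x i then 1 else 0 : ℕ) % 2 = 1)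

/-- The state `|t⟩ ⊗ |x⟩ ⊗ α` of the register. -/
noncomputable def inState (n m : ℕ) (t : Bool) (x : Fin n → Bool) (α : QState m) :
    QState (1 + n + m) :=
  fun y => (if y (tgt n m) = t ∧ (∀ i, y (inp n m i) = x i) then (1 : ℂ) else 0) *
    α (fun j => y (anc n m j))

/-- `C` `α`-computes `⊕ₙ`: for each classical input `x`, the circuit maps
`|0⟩ ⊗ |x⟩ ⊗ α` to `|⊕x⟩ ⊗ φₓ` for some unit vector `φₓ` of the non-target qubits. -/
noncomputable def AlphaComputes (n m : ℕ) {d : ℕ} (C : QAC (1 + n + m) d) (α : QState m) :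
    Prop :=
  ∀ x : Fin n → Bool, ∃ φ : QState (n + m), UnitVec φ ∧
    ∀ y : Fin (1 + n + m) → Bool,
      C.act (inState n m false x α) y =
        (if y (tgt n m) = parityB x then (1 : ℂ) else 0) * φ (fun j => y (nontgt n m j))

/-- `C` weakly computes `⊕ₙ`: it `α`-computes `⊕ₙ` for some unit ancilla state `α`. -/
noncomputable def WeaklyComputes (n m : ℕ) {d : ℕ} (C : QAC (1 + n + m) d) : Prop :=
  ∃ α : QState m, UnitVec α ∧ AlphaComputes n m C α

/-- The all-zeros computational basis state of the ancillas. -/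
noncomputable def zeroAnc (m : ℕ) : QState m :=
  fun z => if z = (fun _ => false) then 1 else 0

/-- `C` computes `⊕ₙ`: it `α`-computes `⊕ₙ` with the all-zeros ancilla state. -/
noncomputable def Computes (n m : ℕ) {d : ℕ} (C : QAC (1 + n + m) d) : Prop :=
  AlphaComputes n m C (zeroAnc m)

/-- A `2 × 2` matrix is semiclassical if it has two zero entries. -/
def Semiclassical (U : Matrix (Fin 2) (Fin 2) ℂ) : Prop :=
  ∃ p q : Fin 2 × Fin 2, p ≠ q ∧ U p.1 p.2 = 0 ∧ U q.1 q.2 = 0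

section AuxDepthRed

open Matrix in
lemma unitary_col_sum {U : Matrix (Fin 2) (Fin 2) ℂ} (hU : U ∈ Matrix.unitaryGroup (Fin 2) ℂ)
    (a c : Fin 2) : ∑ k, (starRingEnd ℂ) (U k a) * U k c = if a = c then 1 else 0 := by
  have h : star U * U = 1 := (Matrix.mem_unitaryGroup_iff'.mp hU)
  have h2 : (star U * U) a c = (1 : Matrix (Fin 2) (Fin 2) ℂ) a c := by rw [h]
  rw [Matrix.mul_apply, Matrix.one_apply] at h2
  simpa [Matrix.star_apply] using h2

open Matrix in
lemma unitary_row_sum {U : Matrix (Fin 2) (Fin 2) ℂ} (hU : U ∈ Matrix.unitaryGroup (Fin 2) ℂ)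
    (a c : Fin 2) : ∑ k, U a k * (starRingEnd ℂ) (U c k) = if a = c then 1 else 0 := by
  have h : U * star U = 1 := (Matrix.mem_unitaryGroup_iff.mp hU)
  have h2 : (U * star U) a c = (1 : Matrix (Fin 2) (Fin 2) ℂ) a c := by rw [h]
  rw [Matrix.mul_apply, Matrix.one_apply] at h2
  simpa [Matrix.star_apply] using h2

lemma sum_pi_prod {N : ℕ} (f : Fin N → Bool → ℂ) :
    ∑ y : Fin N → Bool, ∏ j, f j (y j) = ∏ j, ∑ b, f j b := by
  rw [Finset.prod_univ_sum]
  rw [Fintype.piFinset_univ]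

lemma sum_fin2_bool (f : Fin 2 → ℂ) : ∑ k, f k = ∑ b : Bool, f (bitIdx b) := by
  simp [Fin.sum_univ_two, bitIdx, add_comm]

lemma prod_delta {N : ℕ} (x y : Fin N → Bool) :
    (∏ j, if bitIdx (x j) = bitIdx (y j) then (1 : ℂ) else 0) = if x = y then 1 else 0 := by
  have hb : ∀ j, (if bitIdx (x j) = bitIdx (y j) then (1 : ℂ) else 0)
      = if x j = y j then 1 else 0 := by
    intro j; cases hx : x j <;> cases hy : y j <;> simp [bitIdx]
  simp_rw [hb]
  by_cases h : x = y
  · simp [h]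
  · obtain ⟨j, hj⟩ := Function.ne_iff.mp h
    rw [if_neg h]
    exact Finset.prod_eq_zero (Finset.mem_univ j) (by simp [hj])

lemma layerAct_comp {N : ℕ} (A B : Fin N → Matrix (Fin 2) (Fin 2) ℂ) (ψ : QState N) :
    layerAct (fun j => A j * B j) ψ = layerAct A (layerAct B ψ) := by
  funext x
  unfold layerAct
  calc ∑ y : Fin N → Bool, (∏ j, (A j * B j) (bitIdx (x j)) (bitIdx (y j))) * ψ y
      = ∑ y : Fin N → Bool, (∑ w : Fin N → Bool,
          ∏ j, A j (bitIdx (x j)) (bitIdx (w j)) * B j (bitIdx (w j)) (bitIdx (y j))) * ψ y := by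
        refine Finset.sum_congr rfl fun y _ => ?_
        congr 1
        rw [sum_pi_prod (fun j b => A j (bitIdx (x j)) (bitIdx b) * B j (bitIdx b) (bitIdx (y j)))]
        refine Finset.prod_congr rfl fun j _ => ?_
        rw [Matrix.mul_apply, sum_fin2_bool]
    _ = ∑ w : Fin N → Bool, (∏ j, A j (bitIdx (x j)) (bitIdx (w j))) *
          ∑ y : Fin N → Bool, (∏ j, B j (bitIdx (w j)) (bitIdx (y j))) * ψ y := by
        simp_rw [Finset.sum_mul, Finset.mul_sum]
        rw [Finset.sum_comm]
        refine Finset.sum_congr rfl fun w _ => Finset.sum_congr rfl fun y _ => ?_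
        rw [Finset.prod_mul_distrib, mul_assoc]

lemma layerAct_one {N : ℕ} (ψ : QState N) :
    layerAct (fun _ => (1 : Matrix (Fin 2) (Fin 2) ℂ)) ψ = ψ := by
  funext x
  unfold layerAct
  simp_rw [Matrix.one_apply, prod_delta]
  simp

lemma layerAct_star {N : ℕ} (U : Fin N → Matrix (Fin 2) (Fin 2) ℂ)
    (hU : ∀ j, U j ∈ Matrix.unitaryGroup (Fin 2) ℂ) (ψ : QState N) :
    layerAct (fun j => star (U j)) (layerAct U ψ) = ψ := by
  rw [← layerAct_comp]
  have : (fun j => star (U j) * U j) = fun _ : Fin N => (1 : Matrix (Fin 2) (Fin 2) ℂ) := by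
    funext j; exact Matrix.mem_unitaryGroup_iff'.mp (hU j)
  rw [this, layerAct_one]

end AuxDepthRed
section AuxDepthRed2

lemma sum_norm_sq_eq_conj_sum {N : ℕ} (f : QState N) :
    ((∑ x, ‖f x‖ ^ 2 : ℝ) : ℂ) = ∑ x, (starRingEnd ℂ) (f x) * f x := by
  push_cast
  refine Finset.sum_congr rfl fun x _ => ?_
  rw [Complex.conj_mul']

lemma layerAct_unitVec {N : ℕ} (U : Fin N → Matrix (Fin 2) (Fin 2) ℂ)
    (hU : ∀ j, U j ∈ Matrix.unitaryGroup (Fin 2) ℂ) {ψ : QState N} (hψ : UnitVec ψ) :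
    UnitVec (layerAct U ψ) := by
  have key : ∑ x, (starRingEnd ℂ) (layerAct U ψ x) * layerAct U ψ x
      = ∑ x, (starRingEnd ℂ) (ψ x) * ψ x := by
    unfold layerAct
    calc ∑ x : Fin N → Bool, (starRingEnd ℂ) ((∑ y : Fin N → Bool,
            (∏ j, U j (bitIdx (x j)) (bitIdx (y j))) * ψ y)) *
            (∑ z : Fin N → Bool, (∏ j, U j (bitIdx (x j)) (bitIdx (z j))) * ψ z)
        = ∑ y : Fin N → Bool, ∑ z : Fin N → Bool,
            ((starRingEnd ℂ) (ψ y) * ψ z) * ∑ x : Fin N → Bool,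
              ∏ j, (starRingEnd ℂ) (U j (bitIdx (x j)) (bitIdx (y j)))
                * U j (bitIdx (x j)) (bitIdx (z j)) := by
          simp_rw [map_sum, map_mul, map_prod, Finset.sum_mul_sum, Finset.mul_sum]
          rw [Finset.sum_comm]
          refine Finset.sum_congr rfl fun y _ => ?_
          rw [Finset.sum_comm]
          refine Finset.sum_congr rfl fun z _ => ?_
          refine Finset.sum_congr rfl fun x _ => ?_
          rw [Finset.prod_mul_distrib]
          ring
      _ = ∑ y : Fin N → Bool, ∑ z : Fin N → Bool,
            ((starRingEnd ℂ) (ψ y) * ψ z) * (if y = z then 1 else 0) := by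
          refine Finset.sum_congr rfl fun y _ => Finset.sum_congr rfl fun z _ => ?_
          congr 1
          rw [sum_pi_prod (fun j b => (starRingEnd ℂ) (U j (bitIdx b) (bitIdx (y j)))
            * U j (bitIdx b) (bitIdx (z j)))]
          rw [← prod_delta y z]
          refine Finset.prod_congr rfl fun j _ => ?_
          rw [← sum_fin2_bool (fun k => (starRingEnd ℂ) (U j k (bitIdx (y j))) * U j k (bitIdx (z j)))]
          exact unitary_col_sum (hU j) _ _
      _ = ∑ y : Fin N → Bool, (starRingEnd ℂ) (ψ y) * ψ y := by
          refine Finset.sum_congr rfl fun y _ => ?_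
          simp
  unfold UnitVec at hψ ⊢
  have h1 := sum_norm_sq_eq_conj_sum (layerAct U ψ)
  have h2 := sum_norm_sq_eq_conj_sum ψ
  have : ((∑ x, ‖layerAct U ψ x‖ ^ 2 : ℝ) : ℂ) = ((1 : ℝ) : ℂ) := by
    rw [h1, key, ← h2, hψ]
  exact_mod_cast this

/-- The sign by which a CZ layer multiplies the amplitude of `y`. -/
noncomputable def czSign {N : ℕ} (gs : List (Finset (Fin N))) (y : Fin N → Bool) : ℂ :=
  (gs.map fun S => if ∀ i ∈ S, y i = true then (-1 : ℂ) else 1).prod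

lemma czLayerAct_eq_sign {N : ℕ} (gs : List (Finset (Fin N))) (ψ : QState N)
    (y : Fin N → Bool) : czLayerAct gs ψ y = czSign gs y * ψ y := by
  induction gs with
  | nil => simp [czLayerAct, czSign]
  | cons S gs ih =>
    show czGate S (czLayerAct gs ψ) y = _
    rw [czGate]
    by_cases h : ∀ i ∈ S, y i = true <;>
      simp [h, ih, czSign, List.map_cons, List.prod_cons]

lemma czSign_cons {N : ℕ} (S : Finset (Fin N)) (gs : List (Finset (Fin N))) (y : Fin N → Bool) :
    czSign (S :: gs) y = (if ∀ i ∈ S, y i = true then (-1 : ℂ) else 1) * czSign gs y := by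
  simp [czSign]

lemma czSign_mul_self {N : ℕ} (gs : List (Finset (Fin N))) (y : Fin N → Bool) :
    czSign gs y * czSign gs y = 1 := by
  induction gs with
  | nil => simp [czSign]
  | cons S gs ih =>
    rw [czSign_cons]
    split_ifs <;> linear_combination ih

lemma norm_czSign {N : ℕ} (gs : List (Finset (Fin N))) (y : Fin N → Bool) :
    ‖czSign gs y‖ = 1 := by
  induction gs with
  | nil => simp [czSign]
  | cons S gs ih =>
    rw [czSign_cons, norm_mul, ih]
    split_ifs <;> simp

lemma czLayerAct_invol {N : ℕ} (gs : List (Finset (Fin N))) (ψ : QState N) :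
    czLayerAct gs (czLayerAct gs ψ) = ψ := by
  funext y
  rw [czLayerAct_eq_sign, czLayerAct_eq_sign, ← mul_assoc, czSign_mul_self, one_mul]

end AuxDepthRed2
section AuxDepthRed3

variable {n m : ℕ}

/-- Assemble a full register bit string from a target bit and the non-target bits. -/
def mergeBits (n m : ℕ) (b : Bool) (z : Fin (n + m) → Bool) : Fin (1 + n + m) → Bool :=
  fun i => if h : (i : ℕ) = 0 then b else z ⟨(i : ℕ) - 1, by omega⟩

/-- The non-target bits of a register bit string. -/
def restBits (n m : ℕ) (y : Fin (1 + n + m) → Bool) : Fin (n + m) → Bool :=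
  fun j => y (nontgt n m j)

lemma mergeBits_tgt (b : Bool) (z : Fin (n + m) → Bool) :
    mergeBits n m b z (tgt n m) = b := by
  simp [mergeBits, tgt]

lemma mergeBits_nontgt (b : Bool) (z : Fin (n + m) → Bool) (j : Fin (n + m)) :
    mergeBits n m b z (nontgt n m j) = z j := by
  have h : ((nontgt n m j : Fin (1 + n + m)) : ℕ) = 1 + (j : ℕ) := rfl
  rw [mergeBits]
  rw [dif_neg (by omega)]
  congr 1
  exact Fin.ext (by simp [h])

lemma restBits_mergeBits (b : Bool) (z : Fin (n + m) → Bool) :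
    restBits n m (mergeBits n m b z) = z := by
  funext j; exact mergeBits_nontgt b z j

lemma nontgt_ne_tgt (j : Fin (n + m)) : nontgt n m j ≠ tgt n m := by
  intro h
  have : (1 + (j : ℕ) : ℕ) = 0 := congrArg Fin.val h
  omega

lemma eq_nontgt_of_ne_tgt (i : Fin (1 + n + m)) (h : i ≠ tgt n m) :
    ∃ j : Fin (n + m), nontgt n m j = i := by
  have h0 : (i : ℕ) ≠ 0 := by
    intro h0; exact h (Fin.ext h0)
  refine ⟨⟨(i : ℕ) - 1, by have := i.2; omega⟩, ?_⟩
  exact Fin.ext (by simp [nontgt]; omega)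

lemma mergeBits_self (y : Fin (1 + n + m) → Bool) :
    mergeBits n m (y (tgt n m)) (restBits n m y) = y := by
  funext i
  by_cases h : i = tgt n m
  · rw [h, mergeBits_tgt]
  · obtain ⟨j, rfl⟩ := eq_nontgt_of_ne_tgt i h
    rw [mergeBits_nontgt]; rfl

/-- The splitting of the register into the target qubit and the rest, as an equivalence. -/
def mergeEquiv (n m : ℕ) : (Bool × (Fin (n + m) → Bool)) ≃ (Fin (1 + n + m) → Bool) where
  toFun p := mergeBits n m p.1 p.2
  invFun y := (y (tgt n m), restBits n m y)
  left_inv p := by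
    obtain ⟨b, z⟩ := p
    simp [mergeBits_tgt, restBits_mergeBits]
  right_inv y := mergeBits_self y

lemma sum_split (f : (Fin (1 + n + m) → Bool) → ℂ) :
    ∑ y, f y = ∑ b : Bool, ∑ z : Fin (n + m) → Bool, f (mergeBits n m b z) := by
  have h1 : ∑ p : Bool × (Fin (n + m) → Bool), f (mergeBits n m p.1 p.2) = ∑ y, f y :=
    Fintype.sum_equiv (mergeEquiv n m) _ _ (fun p => rfl)
  rw [← h1, Fintype.sum_prod_type]

lemma prod_split (F : Fin (1 + n + m) → ℂ) :
    ∏ j, F j = F (tgt n m) * ∏ j : Fin (n + m), F (nontgt n m j) := by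
  have huniv : (Finset.univ : Finset (Fin (1 + n + m)))
      = insert (tgt n m) (Finset.univ.image (nontgt n m)) := by
    ext i
    simp only [Finset.mem_univ, Finset.mem_insert, Finset.mem_image, true_iff]
    by_cases h : i = tgt n m
    · exact Or.inl h
    · obtain ⟨j, hj⟩ := eq_nontgt_of_ne_tgt i h
      exact Or.inr ⟨j, by simp [hj]⟩
  have hnotmem : tgt n m ∉ Finset.univ.image (nontgt n m) := by
    intro hmem
    obtain ⟨j, -, hj⟩ := Finset.mem_image.mp hmem
    exact nontgt_ne_tgt j hj
  have hinj : ∀ x ∈ (Finset.univ : Finset (Fin (n + m))), ∀ y ∈ Finset.univ,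
      nontgt n m x = nontgt n m y → x = y := by
    intro x _ y _ h
    have : 1 + (x : ℕ) = 1 + (y : ℕ) := congrArg Fin.val h
    exact Fin.ext (by omega)
  rw [huniv, Finset.prod_insert hnotmem, Finset.prod_image hinj]

lemma layerAct_split (V : Fin (1 + n + m) → Matrix (Fin 2) (Fin 2) ℂ) (g : Bool → ℂ)
    (h : QState (n + m)) :
    layerAct V (fun y => g (y (tgt n m)) * h (restBits n m y)) =
      fun y => (∑ c : Bool, V (tgt n m) (bitIdx (y (tgt n m))) (bitIdx c) * g c) *
        layerAct (fun j => V (nontgt n m j)) h (restBits n m y) := by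
  funext x
  unfold layerAct
  rw [sum_split (fun y => (∏ j, V j (bitIdx (x j)) (bitIdx (y j))) *
    (g (y (tgt n m)) * h (restBits n m y)))]
  rw [Finset.sum_mul_sum]
  refine Finset.sum_congr rfl fun b _ => Finset.sum_congr rfl fun z _ => ?_
  rw [prod_split (fun j => V j (bitIdx (x j)) (bitIdx (mergeBits n m b z j)))]
  simp_rw [mergeBits_tgt, mergeBits_nontgt, restBits_mergeBits]
  show (V (tgt n m) (bitIdx (x (tgt n m))) (bitIdx b) *
      ∏ j : Fin (n + m), V (nontgt n m j) (bitIdx (x (nontgt n m j))) (bitIdx (z j))) *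
      (g b * h z) = _
  show _ = V (tgt n m) (bitIdx (x (tgt n m))) (bitIdx b) * g b *
      ((∏ j : Fin (n + m), V (nontgt n m j) (bitIdx (restBits n m x j)) (bitIdx (z j))) * h z)
  simp only [restBits]
  ring

lemma layerAct_tgt_only (B : Matrix (Fin 2) (Fin 2) ℂ) (h : QState (n + m)) (g : Bool → ℂ) :
    layerAct (fun j => if j = tgt n m then B else 1) (fun y => g (y (tgt n m)) * h (restBits n m y)) =
      fun y => (∑ c : Bool, B (bitIdx (y (tgt n m))) (bitIdx c) * g c) * h (restBits n m y) := by
  rw [layerAct_split]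
  have h1 : layerAct (fun j : Fin (n + m) =>
      if nontgt n m j = tgt n m then B else (1 : Matrix (Fin 2) (Fin 2) ℂ)) h = h := by
    have : (fun j : Fin (n + m) =>
        if nontgt n m j = tgt n m then B else (1 : Matrix (Fin 2) (Fin 2) ℂ))
        = fun _ => (1 : Matrix (Fin 2) (Fin 2) ℂ) := by
      funext j; rw [if_neg (nontgt_ne_tgt j)]
    rw [this, layerAct_one]
  funext y
  rw [h1]
  simp

lemma unitVec_mul_of_norm_one {k : ℕ} (a : (Fin k → Bool) → ℂ) (h : QState k)
    (ha : ∀ z, ‖a z‖ = 1) (hh : UnitVec h) : UnitVec (fun z => a z * h z) := by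
  unfold UnitVec at hh ⊢
  simp_rw [norm_mul, ha, one_mul]
  exact hh

end AuxDepthRed3
section AuxDepthRed4

variable {n m : ℕ}

lemma sum_bool_delta (M : Bool → ℂ) (p : Bool) :
    ∑ c : Bool, M c * (if c = p then 1 else 0) = M p := by
  cases p <;> simp [Fintype.sum_bool]

lemma bitIdx_eq_iff (b p : Bool) : (bitIdx b = bitIdx p) ↔ (b = p) := by
  cases b <;> cases p <;> simp [bitIdx]

lemma norm_one_of_mul_conj {z : ℂ} (h : z * (starRingEnd ℂ) z = 1) : ‖z‖ = 1 := by
  have h2 : ((Complex.normSq z : ℝ) : ℂ) = 1 := by rw [← Complex.mul_conj]; exact h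
  have h3 : Complex.normSq z = 1 := by exact_mod_cast h2
  have h4 : ‖z‖ ^ 2 = 1 := by rw [← Complex.sq_norm] at h3; exact h3
  nlinarith [norm_nonneg z]

lemma semiclassical_pattern {U : Matrix (Fin 2) (Fin 2) ℂ}
    (hU : U ∈ Matrix.unitaryGroup (Fin 2) ℂ) (h : Semiclassical U) :
    (U 0 0 = 0 ∧ U 1 1 = 0) ∨ (U 0 1 = 0 ∧ U 1 0 = 0) := by
  obtain ⟨p, q, hne, hp, hq⟩ := h
  have hrow_ne : ∀ r, ¬ (U r 0 = 0 ∧ U r 1 = 0) := by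
    rintro r ⟨h0, h1⟩
    have := unitary_row_sum hU r r
    simp [Fin.sum_univ_two, h0, h1] at this
  have hcol_ne : ∀ c, ¬ (U 0 c = 0 ∧ U 1 c = 0) := by
    rintro c ⟨h0, h1⟩
    have := unitary_col_sum hU c c
    simp [Fin.sum_univ_two, h0, h1] at this
  have r0 := hrow_ne 0
  have r1 := hrow_ne 1
  have c0 := hcol_ne 0
  have c1 := hcol_ne 1
  obtain ⟨p1, p2⟩ := p
  obtain ⟨q1, q2⟩ := q
  fin_cases p1 <;> fin_cases p2 <;> fin_cases q1 <;> fin_cases q2 <;> simp_all <;> tauto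

/-- The sign contributed on the target qubit by the last CZ layer. -/
noncomputable def tSign (n m : ℕ) (gs : List (Finset (Fin (1 + n + m)))) (b : Bool) : ℂ :=
  (gs.map fun S => if tgt n m ∈ S then (if b then (-1 : ℂ) else 1) else 1).prod

/-- The sign contributed on the non-target qubits by the last CZ layer. -/
noncomputable def rSign (n m : ℕ) (gs : List (Finset (Fin (1 + n + m))))
    (z : Fin (n + m) → Bool) : ℂ :=
  (gs.map fun S => if tgt n m ∈ S then 1
    else (if ∀ j, nontgt n m j ∈ S → z j = true then (-1 : ℂ) else 1)).prod

lemma tSign_cons (S gs b) : tSign n m (S :: gs) b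
    = (if tgt n m ∈ S then (if b then (-1 : ℂ) else 1) else 1) * tSign n m gs b := by
  simp [tSign]

lemma rSign_cons (S gs z) : rSign n m (S :: gs) z
    = (if tgt n m ∈ S then 1
        else (if ∀ j, nontgt n m j ∈ S → z j = true then (-1 : ℂ) else 1)) * rSign n m gs z := by
  simp [rSign]

lemma tSign_pm (gs b) : tSign n m gs b = 1 ∨ tSign n m gs b = -1 := by
  induction gs with
  | nil => left; simp [tSign]
  | cons S gs ih =>
    rw [tSign_cons]
    rcases ih with h | h <;> rw [h] <;> split_ifs <;> simp

lemma tSign_mul_self (gs b) : tSign n m gs b * tSign n m gs b = 1 := by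
  rcases tSign_pm (n := n) (m := m) gs b with h | h <;> rw [h] <;> ring

lemma norm_rSign (gs z) : ‖rSign n m gs z‖ = 1 := by
  induction gs with
  | nil => simp [rSign]
  | cons S gs ih =>
    rw [rSign_cons, norm_mul, ih]
    split_ifs <;> simp

lemma czSign_factor (gs : List (Finset (Fin (1 + n + m))))
    (hgs : ∀ S ∈ gs, tgt n m ∈ S → S.card < 2) (b : Bool) (z : Fin (n + m) → Bool) :
    czSign gs (mergeBits n m b z) = tSign n m gs b * rSign n m gs z := by
  induction gs with
  | nil => simp [czSign, tSign, rSign]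
  | cons S gs ih =>
    have hrest : ∀ T ∈ gs, tgt n m ∈ T → T.card < 2 := fun T hT => hgs T (by simp [hT])
    rw [czSign_cons, ih hrest, tSign_cons, rSign_cons]
    by_cases ht : tgt n m ∈ S
    · have h1 : 1 ≤ S.card := Finset.card_pos.mpr ⟨_, ht⟩
      have h2 : S.card = 1 := by have := hgs S (by simp) ht; omega
      obtain ⟨a, ha⟩ := Finset.card_eq_one.mp h2
      have hat : a = tgt n m := by
        have := ht
        rw [ha, Finset.mem_singleton] at this
        exact this.symm
      have hcond : (∀ i ∈ S, mergeBits n m b z i = true) ↔ b = true := by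
        rw [ha, hat]
        simp [mergeBits_tgt]
      rw [if_pos ht, if_pos ht, if_congr hcond rfl rfl]
      cases b <;> simp <;> ring
    · have hcond : (∀ i ∈ S, mergeBits n m b z i = true)
          ↔ (∀ j, nontgt n m j ∈ S → z j = true) := by
        constructor
        · intro hall j hj
          have := hall (nontgt n m j) hj
          rwa [mergeBits_nontgt] at this
        · intro hall i hi
          have hne : i ≠ tgt n m := fun e => ht (e ▸ hi)
          obtain ⟨j, rfl⟩ := eq_nontgt_of_ne_tgt i hne
          rw [mergeBits_nontgt]
          exact hall j hi
      rw [if_neg ht, if_neg ht, if_congr hcond rfl rfl]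
      ring

/-- A diagonal single-qubit gate with entries given by a `Bool`-indexed family. -/
noncomputable def diagB (t : Bool → ℂ) : Matrix (Fin 2) (Fin 2) ℂ :=
  Matrix.diagonal (fun k => if k = 0 then t false else t true)

lemma mul_diagB_apply (U : Matrix (Fin 2) (Fin 2) ℂ) (t : Bool → ℂ) (a : Fin 2) (c : Bool) :
    (U * diagB t) a (bitIdx c) = U a (bitIdx c) * t c := by
  rw [diagB, Matrix.mul_diagonal]
  cases c <;> simp [bitIdx]

lemma diagB_unitary (t : Bool → ℂ) (h : ∀ b, t b = 1 ∨ t b = -1) :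
    diagB t ∈ Matrix.unitaryGroup (Fin 2) ℂ := by
  rw [Matrix.mem_unitaryGroup_iff, diagB, Matrix.star_eq_conjTranspose,
    Matrix.diagonal_conjTranspose, Matrix.diagonal_mul_diagonal]
  have hval : ∀ b, t b * (starRingEnd ℂ) (t b) = 1 := by
    intro b; rcases h b with hb | hb <;> rw [hb] <;> simp
  have heq : (fun i : Fin 2 => (if i = 0 then t false else t true) *
      (starRingEnd ℂ) (if i = 0 then t false else t true)) = fun _ : Fin 2 => (1 : ℂ) := by
    funext k
    split_ifs <;> exact hval _
  simp only [Pi.star_apply, Complex.star_def]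
  rw [show (Matrix.diagonal fun i : Fin 2 =>
      (if i = 0 then t false else t true) *
        (starRingEnd ℂ) (if i = 0 then t false else t true)) = 1 from by rw [heq, Matrix.diagonal_one]]

/-- The Pauli X gate. -/
noncomputable def pauliX : Matrix (Fin 2) (Fin 2) ℂ := !![0, 1; 1, 0]

lemma pauliX_unitary : pauliX ∈ Matrix.unitaryGroup (Fin 2) ℂ := by
  rw [Matrix.mem_unitaryGroup_iff]
  ext i j
  fin_cases i <;> fin_cases j <;>
    simp [pauliX, Matrix.mul_apply, Fin.sum_univ_two, Matrix.one_apply, Matrix.star_apply]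

lemma pauliX_apply (b c : Bool) : pauliX (bitIdx b) (bitIdx c) = if b = !c then 1 else 0 := by
  cases b <;> cases c <;> simp [pauliX, bitIdx]

end AuxDepthRed4
theorem depth_reduction (n m d : ℕ) (hn : 1 ≤ n) (hd : 2 ≤ d)
    (C : QAC (1 + n + m) d) (α : QState m) (hα : UnitVec α)
    (hcomp : AlphaComputes n m C α)
    (hcase :
      Semiclassical (C.L (Fin.last d) (tgt n m)) ∨
      ∀ S ∈ C.Z ⟨d - 1, by omega⟩, tgt n m ∈ S → S.card < 2) :
    ∃ C' : QAC (1 + n + m) (d - 1), AlphaComputes n m C' α := by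
  obtain ⟨e, rfl⟩ : ∃ e, d = e + 1 := ⟨d - 1, by omega⟩
  have hZidx : (⟨e + 1 - 1, by omega⟩ : Fin (e + 1)) = Fin.last e := rfl
  rw [hZidx] at hcase
  -- decomposition of the circuit action
  have hfold : ∀ ψ : QState (1 + n + m), C.act ψ = layerAct (C.L (Fin.last (e + 1)))
      (czLayerAct (C.Z (Fin.last e)) (layerAct (C.L (Fin.last e).castSucc)
        ((List.finRange e).foldl (fun φ i => czLayerAct (C.Z i.castSucc)
          (layerAct (C.L i.castSucc.castSucc) φ)) ψ))) := by
    intro ψ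
    show layerAct (C.L (Fin.last (e + 1))) _ = _
    rw [List.finRange_succ_last, List.foldl_append, List.foldl_map, List.foldl_cons,
      List.foldl_nil]
  -- the state after the first `e` single-qubit and CZ layers plus one more single-qubit layer
  set σ : (Fin n → Bool) → QState (1 + n + m) := fun x =>
    layerAct (C.L (Fin.last e).castSucc)
      ((List.finRange e).foldl (fun φ i => czLayerAct (C.Z i.castSucc)
        (layerAct (C.L i.castSucc.castSucc) φ)) (inState n m false x α)) with hσdef
  -- structure of σ x
  have hsigma : ∀ x : Fin n → Bool, ∃ h : QState (n + m), UnitVec h ∧ ∀ y,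
      σ x y = czSign (C.Z (Fin.last e)) y *
        ((starRingEnd ℂ) (C.L (Fin.last (e + 1)) (tgt n m)
            (bitIdx (parityB x)) (bitIdx (y (tgt n m)))) *
          h (restBits n m y)) := by
    intro x
    obtain ⟨φ, hφu, hφ⟩ := hcomp x
    refine ⟨layerAct (fun j => star (C.L (Fin.last (e + 1)) (nontgt n m j))) φ,
      layerAct_unitVec _ (fun j => Unitary.star_mem (C.hL _ _)) hφu, ?_⟩
    have hC : C.act (inState n m false x α)
        = fun y => (if y (tgt n m) = parityB x then (1 : ℂ) else 0) * φ (restBits n m y) :=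
      funext fun y => hφ y
    rw [hfold] at hC
    have h2 : czLayerAct (C.Z (Fin.last e)) (σ x)
        = layerAct (fun j => star (C.L (Fin.last (e + 1)) j))
            (fun y => (if y (tgt n m) = parityB x then (1 : ℂ) else 0) * φ (restBits n m y)) := by
      have hσx : σ x = layerAct (C.L (Fin.last e).castSucc)
          ((List.finRange e).foldl (fun φ i => czLayerAct (C.Z i.castSucc)
            (layerAct (C.L i.castSucc.castSucc) φ)) (inState n m false x α)) := rfl
      rw [hσx, ← hC]
      rw [layerAct_star _ (fun j => C.hL _ j)]
    rw [layerAct_split (fun j => star (C.L (Fin.last (e + 1)) j))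
      (fun b => if b = parityB x then (1 : ℂ) else 0) φ] at h2
    intro y
    have hinv : σ x y = czLayerAct (C.Z (Fin.last e)) (czLayerAct (C.Z (Fin.last e)) (σ x)) y := by
      rw [czLayerAct_invol]
    rw [hinv, czLayerAct_eq_sign, h2]
    simp only [Matrix.star_apply, Complex.star_def]
    rw [sum_bool_delta (fun c => (starRingEnd ℂ)
      (C.L (Fin.last (e + 1)) (tgt n m) (bitIdx c) (bitIdx (y (tgt n m))))) (parityB x)]
  -- the key claim: a single-qubit correction on the target finishes the job
  have norm_conj' : ∀ z : ℂ, ‖(starRingEnd ℂ) z‖ = ‖z‖ := fun z => RCLike.norm_conj z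
  have main : ∃ B ∈ Matrix.unitaryGroup (Fin 2) ℂ, ∀ x : Fin n → Bool,
      ∃ H : QState (n + m), UnitVec H ∧
        layerAct (fun j => if j = tgt n m then B else 1) (σ x)
          = fun y => (if y (tgt n m) = parityB x then (1 : ℂ) else 0) * H (restBits n m y) := by
    rcases hcase with hsc | hnb
    · -- case (i): the last single-qubit gate on the target is semiclassical
      rcases semiclassical_pattern (C.hL (Fin.last (e + 1)) (tgt n m)) hsc with
        ⟨h00, h11⟩ | ⟨h01, h10⟩
      · -- diagonal entries vanish: correct with the X gate
        refine ⟨pauliX, pauliX_unitary, fun x => ?_⟩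
        obtain ⟨h, hhu, hrep⟩ := hsigma x
        set p := parityB x with hp
        set cc := (starRingEnd ℂ)
          (C.L (Fin.last (e + 1)) (tgt n m) (bitIdx p) (bitIdx (!p))) with hcc
        have hzero : C.L (Fin.last (e + 1)) (tgt n m) (bitIdx p) (bitIdx p) = 0 := by
          cases hpv : p <;> simp only [bitIdx, if_true, if_false] <;> simp [h00, h11]
        have hrow := unitary_row_sum (C.hL (Fin.last (e + 1)) (tgt n m)) (bitIdx p) (bitIdx p)
        rw [Fin.sum_univ_two, if_pos rfl] at hrow
        have hcnorm : ‖cc‖ = 1 := by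
          rw [hcc, norm_conj']
          cases hpv : p
          · rw [hpv] at hrow hzero
            simp [bitIdx] at hzero
            simp [bitIdx, hzero] at hrow
            simpa [bitIdx] using norm_one_of_mul_conj hrow
          · rw [hpv] at hrow hzero
            simp [bitIdx] at hzero
            simp [bitIdx, hzero] at hrow
            simpa [bitIdx] using norm_one_of_mul_conj hrow
        refine ⟨fun z => (czSign (C.Z (Fin.last e)) (mergeBits n m (!p) z) * cc) * h z,
          unitVec_mul_of_norm_one _ _
            (fun z => by rw [norm_mul, norm_czSign, hcnorm, one_mul]) hhu, ?_⟩
        have hσ : σ x = fun y => (if y (tgt n m) = !p then (1 : ℂ) else 0) *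
            ((czSign (C.Z (Fin.last e)) (mergeBits n m (!p) (restBits n m y)) * cc) *
              h (restBits n m y)) := by
          funext y
          rw [hrep y]
          by_cases hy : y (tgt n m) = !p
          · rw [if_pos hy]
            have hcz : czSign (C.Z (Fin.last e)) y
                = czSign (C.Z (Fin.last e)) (mergeBits n m (!p) (restBits n m y)) := by
              conv_lhs => rw [← mergeBits_self y, hy]
            rw [hcz, hcc, hy]
            ring
          · have hy2 : y (tgt n m) = p := by
              cases hyv : y (tgt n m) <;> cases hpv : p <;> simp_all
            rw [if_neg hy, hy2, hzero]
            simp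
        rw [hσ, layerAct_tgt_only pauliX
          (fun z => (czSign (C.Z (Fin.last e)) (mergeBits n m (!p) z) * cc) * h z)
          (fun b => if b = !p then (1 : ℂ) else 0)]
        funext y
        congr 1
        rw [sum_bool_delta (fun c => pauliX (bitIdx (y (tgt n m))) (bitIdx c)) (!p),
          pauliX_apply]
        simp
      · -- off-diagonal entries vanish: no correction needed
        refine ⟨1, one_mem _, fun x => ?_⟩
        obtain ⟨h, hhu, hrep⟩ := hsigma x
        set p := parityB x with hp
        set cc := (starRingEnd ℂ)
          (C.L (Fin.last (e + 1)) (tgt n m) (bitIdx p) (bitIdx p)) with hcc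
        have hzero : C.L (Fin.last (e + 1)) (tgt n m) (bitIdx p) (bitIdx (!p)) = 0 := by
          cases hpv : p <;> simp only [bitIdx, Bool.not_false, Bool.not_true, if_true, if_false] <;>
            simp [h01, h10]
        have hrow := unitary_row_sum (C.hL (Fin.last (e + 1)) (tgt n m)) (bitIdx p) (bitIdx p)
        rw [Fin.sum_univ_two, if_pos rfl] at hrow
        have hcnorm : ‖cc‖ = 1 := by
          rw [hcc, norm_conj']
          cases hpv : p
          · rw [hpv] at hrow hzero
            simp [bitIdx] at hzero
            simp [bitIdx, hzero] at hrow
            simpa [bitIdx] using norm_one_of_mul_conj hrow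
          · rw [hpv] at hrow hzero
            simp [bitIdx] at hzero
            simp [bitIdx, hzero] at hrow
            simpa [bitIdx] using norm_one_of_mul_conj hrow
        refine ⟨fun z => (czSign (C.Z (Fin.last e)) (mergeBits n m p z) * cc) * h z,
          unitVec_mul_of_norm_one _ _
            (fun z => by rw [norm_mul, norm_czSign, hcnorm, one_mul]) hhu, ?_⟩
        have hσ : σ x = fun y => (if y (tgt n m) = p then (1 : ℂ) else 0) *
            ((czSign (C.Z (Fin.last e)) (mergeBits n m p (restBits n m y)) * cc) *
              h (restBits n m y)) := by
          funext y
          rw [hrep y]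
          by_cases hy : y (tgt n m) = p
          · rw [if_pos hy]
            have hcz : czSign (C.Z (Fin.last e)) y
                = czSign (C.Z (Fin.last e)) (mergeBits n m p (restBits n m y)) := by
              conv_lhs => rw [← mergeBits_self y, hy]
            rw [hcz, hcc, hy]
            ring
          · have hy2 : y (tgt n m) = !p := by
              cases hyv : y (tgt n m) <;> cases hpv : p <;> simp_all
            rw [if_neg hy, hy2, hzero]
            simp
        rw [hσ, layerAct_tgt_only 1
          (fun z => (czSign (C.Z (Fin.last e)) (mergeBits n m p z) * cc) * h z)
          (fun b => if b = p then (1 : ℂ) else 0)]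
        funext y
        congr 1
        rw [sum_bool_delta (fun c => (1 : Matrix (Fin 2) (Fin 2) ℂ)
          (bitIdx (y (tgt n m))) (bitIdx c)) p, Matrix.one_apply]
        simp [bitIdx_eq_iff]
    · -- case (ii): no large CZ gate on the target in the last CZ layer
      refine ⟨C.L (Fin.last (e + 1)) (tgt n m) * diagB (tSign n m (C.Z (Fin.last e))),
        mul_mem (C.hL _ _) (diagB_unitary _ (tSign_pm _)), fun x => ?_⟩
      obtain ⟨h, hhu, hrep⟩ := hsigma x
      refine ⟨fun z => rSign n m (C.Z (Fin.last e)) z * h z,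
        unitVec_mul_of_norm_one _ _ (fun z => norm_rSign _ z) hhu, ?_⟩
      have hσ : σ x = fun y => (tSign n m (C.Z (Fin.last e)) (y (tgt n m)) *
          (starRingEnd ℂ) (C.L (Fin.last (e + 1)) (tgt n m)
            (bitIdx (parityB x)) (bitIdx (y (tgt n m))))) *
          (rSign n m (C.Z (Fin.last e)) (restBits n m y) * h (restBits n m y)) := by
        funext y
        rw [hrep y]
        have hcz : czSign (C.Z (Fin.last e)) y
            = tSign n m (C.Z (Fin.last e)) (y (tgt n m)) *
              rSign n m (C.Z (Fin.last e)) (restBits n m y) := by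
          conv_lhs => rw [← mergeBits_self y]
          exact czSign_factor _ hnb _ _
        rw [hcz]
        ring
      rw [hσ, layerAct_tgt_only
        (C.L (Fin.last (e + 1)) (tgt n m) * diagB (tSign n m (C.Z (Fin.last e))))
        (fun z => rSign n m (C.Z (Fin.last e)) z * h z)
        (fun b => tSign n m (C.Z (Fin.last e)) b *
          (starRingEnd ℂ) (C.L (Fin.last (e + 1)) (tgt n m) (bitIdx (parityB x)) (bitIdx b)))]
      funext y
      congr 1
      calc ∑ c : Bool, (C.L (Fin.last (e + 1)) (tgt n m) * diagB (tSign n m (C.Z (Fin.last e))))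
              (bitIdx (y (tgt n m))) (bitIdx c) *
            (tSign n m (C.Z (Fin.last e)) c *
              (starRingEnd ℂ) (C.L (Fin.last (e + 1)) (tgt n m) (bitIdx (parityB x)) (bitIdx c)))
          = ∑ c : Bool, C.L (Fin.last (e + 1)) (tgt n m) (bitIdx (y (tgt n m))) (bitIdx c) *
              (starRingEnd ℂ) (C.L (Fin.last (e + 1)) (tgt n m) (bitIdx (parityB x)) (bitIdx c)) := by
            refine Finset.sum_congr rfl fun c _ => ?_
            rw [mul_diagB_apply]
            have ht := tSign_mul_self (n := n) (m := m) (C.Z (Fin.last e)) c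
            linear_combination (C.L (Fin.last (e + 1)) (tgt n m) (bitIdx (y (tgt n m))) (bitIdx c) *
              (starRingEnd ℂ) (C.L (Fin.last (e + 1)) (tgt n m)
                (bitIdx (parityB x)) (bitIdx c))) * ht
        _ = ∑ k : Fin 2, C.L (Fin.last (e + 1)) (tgt n m) (bitIdx (y (tgt n m))) k *
              (starRingEnd ℂ) (C.L (Fin.last (e + 1)) (tgt n m) (bitIdx (parityB x)) k) :=
            (sum_fin2_bool (fun k => C.L (Fin.last (e + 1)) (tgt n m) (bitIdx (y (tgt n m))) k *
              (starRingEnd ℂ) (C.L (Fin.last (e + 1)) (tgt n m) (bitIdx (parityB x)) k))).symm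
        _ = if bitIdx (y (tgt n m)) = bitIdx (parityB x) then 1 else 0 :=
            unitary_row_sum (C.hL _ _) _ _
        _ = if y (tgt n m) = parityB x then 1 else 0 := by simp [bitIdx_eq_iff]
  -- build the depth-(e) circuit
  obtain ⟨B, hB, hmain⟩ := main
  show ∃ C' : QAC (1 + n + m) e, AlphaComputes n m C' α
  refine ⟨⟨fun i j => (if i = Fin.last e ∧ j = tgt n m then B else 1) * C.L i.castSucc j,
    fun i j => mul_mem (by split_ifs; exacts [hB, one_mem _]) (C.hL _ _),
    fun i => C.Z i.castSucc, fun i => C.hZ _⟩, ?_⟩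
  intro x
  obtain ⟨H, hHu, hHeq⟩ := hmain x
  refine ⟨H, hHu, fun y => ?_⟩
  have hact : QAC.act ⟨fun i j => (if i = Fin.last e ∧ j = tgt n m then B else 1) * C.L i.castSucc j,
      fun i j => mul_mem (by split_ifs; exacts [hB, one_mem _]) (C.hL _ _),
      fun i => C.Z i.castSucc, fun i => C.hZ _⟩ (inState n m false x α)
      = layerAct (fun j => if j = tgt n m then B else 1) (σ x) := by
    show layerAct _ ((List.finRange e).foldl _ _) = _
    have hfold2 : (List.finRange e).foldl (fun φ (i : Fin e) => czLayerAct (C.Z i.castSucc)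
          (layerAct (fun j => (if i.castSucc = Fin.last e ∧ j = tgt n m then B else 1)
            * C.L i.castSucc.castSucc j) φ)) (inState n m false x α)
        = (List.finRange e).foldl (fun φ i => czLayerAct (C.Z i.castSucc)
          (layerAct (C.L i.castSucc.castSucc) φ)) (inState n m false x α) := by
      refine List.foldl_ext _ _ _ fun φ i _ => ?_
      congr 1
      have : (fun j => (if i.castSucc = Fin.last e ∧ j = tgt n m then B else 1)
          * C.L i.castSucc.castSucc j) = C.L i.castSucc.castSucc := by
        funext j
        rw [if_neg (fun hc => (Fin.castSucc_lt_last i).ne hc.1), one_mul]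
      rw [this]
    rw [hfold2]
    change layerAct (fun j => (if Fin.last e = Fin.last e ∧ j = tgt n m then B else 1)
      * C.L (Fin.last e).castSucc j) _ = _
    have htop : (fun j => (if Fin.last e = Fin.last e ∧ j = tgt n m then B else 1)
        * C.L (Fin.last e).castSucc j)
        = fun j => (if j = tgt n m then B else (1 : Matrix (Fin 2) (Fin 2) ℂ))
            * C.L (Fin.last e).castSucc j := by
      funext j
      by_cases hj : j = tgt n m <;> simp [hj]
    rw [htop, layerAct_comp]
  rw [hact, hHeq]
  rfl
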